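/- Let n = 4 and let r_1, r_2, r_3, r_4 > 0. At any parade with signed coordinates x_i = ε_i r_i (ε_i ∈ {±1}, ε_4 = 1) such that x_i ≠ x_{i+1} for all i mod 4, the Hessian matrix of L with respect to (α_1, α_2, α_3) equals the tridiagonal matrix [[b_1 + b_2, −b_2, 0], [−b_2, b_2 + b_3, −b_3], [0, −b_3, b_3 + b_4]] with b_i = x_{i−1} x_i / |x_{i−1} − x_i| (indices mod 4), and its determinant equals H(x) = (x_1 x_2 x_3 x_4 / (|x_1 − x_2| |x_2 − x_3| |x_3 − x_4| |x_4 − x_1|)) · (x_1 x_2 |x_3 − x_4| + x_2 x_3 |x_4 − x_1| + x_3 x_4 |x_1 − x_2| + x_4 x_1 |x_2 − x_3|). -/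

import Mathlib

open Real

/-- Length of the chordal segment between points at radii `r`, `r'` whose polar angles
differ by `θ`. -/
noncomputable def ell (r r' θ : ℝ) : ℝ :=
  Real.sqrt (r ^ 2 + r' ^ 2 - 2 * r * r' * Real.cos θ)

/-- The perimeter of the connecting cycle for four concentric circles of radii
`r1, r2, r3, r4`, as a function of the polar angles `a1, a2, a3` of the first three
vertices, the fourth angle being fixed to `0`. -/
noncomputable def L4 (r1 r2 r3 r4 : ℝ) (a1 a2 a3 : ℝ) : ℝ :=
  ell r1 r2 (a2 - a1) + ell r2 r3 (a3 - a2) + ell r3 r4 (0 - a3) + ell r4 r1 (a1 - 0)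

/-- Partial derivative in the first of three variables. -/
noncomputable def pd1 (f : ℝ → ℝ → ℝ → ℝ) (a b c : ℝ) : ℝ := deriv (fun x => f x b c) a

/-- Partial derivative in the second of three variables. -/
noncomputable def pd2 (f : ℝ → ℝ → ℝ → ℝ) (a b c : ℝ) : ℝ := deriv (fun y => f a y c) b

/-- Partial derivative in the third of three variables. -/
noncomputable def pd3 (f : ℝ → ℝ → ℝ → ℝ) (a b c : ℝ) : ℝ := deriv (fun z => f a b z) c

/-- The Hessian matrix of `L4 r1 r2 r3 r4` at `(a, b, c)` in the reduced coordinates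
`(α₁, α₂, α₃)`. -/
noncomputable def hess4 (r1 r2 r3 r4 a b c : ℝ) : Matrix (Fin 3) (Fin 3) ℝ :=
  !![pd1 (pd1 (L4 r1 r2 r3 r4)) a b c, pd1 (pd2 (L4 r1 r2 r3 r4)) a b c,
       pd1 (pd3 (L4 r1 r2 r3 r4)) a b c;
     pd2 (pd1 (L4 r1 r2 r3 r4)) a b c, pd2 (pd2 (L4 r1 r2 r3 r4)) a b c,
       pd2 (pd3 (L4 r1 r2 r3 r4)) a b c;
     pd3 (pd1 (L4 r1 r2 r3 r4)) a b c, pd3 (pd2 (L4 r1 r2 r3 r4)) a b c,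
       pd3 (pd3 (L4 r1 r2 r3 r4)) a b c]


/-! Auxiliary machinery -/

/-- The squared chord length. -/
noncomputable def Qc (r r' θ : ℝ) : ℝ := r ^ 2 + r' ^ 2 - 2 * r * r' * Real.cos θ

/-- Derivative of `ell` in the angle. -/
noncomputable def Gc (r r' θ : ℝ) : ℝ := r * r' * Real.sin θ / ell r r' θ

lemma ell_eq' (r r' θ : ℝ) : ell r r' θ = Real.sqrt (Qc r r' θ) := rfl

lemma ell_pos' {r r' θ : ℝ} (h : 0 < Qc r r' θ) : 0 < ell r r' θ := Real.sqrt_pos.mpr h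

lemma hasDerivAt_ell {r r' θ : ℝ} (h : 0 < Qc r r' θ) :
    HasDerivAt (fun t => ell r r' t) (r * r' * Real.sin θ / ell r r' θ) θ := by
  have hQ : HasDerivAt (fun t => r ^ 2 + r' ^ 2 - 2 * r * r' * Real.cos t)
      (2 * r * r' * Real.sin θ) θ := by
    have := ((Real.hasDerivAt_cos θ).const_mul (2 * r * r')).const_sub (r ^ 2 + r' ^ 2)
    simpa [mul_comm] using this
  have hs := (Real.hasDerivAt_sqrt (ne_of_gt h)).comp θ hQ
  have hne : ell r r' θ ≠ 0 := ne_of_gt (ell_pos' h)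
  refine hs.congr_deriv ?_
  rw [ell_eq'] at hne ⊢
  field_simp [Qc]

lemma hasDerivAt_Gc {r r' θ : ℝ} (h : 0 < Qc r r' θ) (hs : Real.sin θ = 0) :
    HasDerivAt (fun t => Gc r r' t) (r * r' * Real.cos θ / ell r r' θ) θ := by
  have hne : ell r r' θ ≠ 0 := ne_of_gt (ell_pos' h)
  have h1 : HasDerivAt (fun t => r * r' * Real.sin t) (r * r' * Real.cos θ) θ :=
    (Real.hasDerivAt_sin θ).const_mul (r * r')
  have h2 : HasDerivAt (fun t => (ell r r' t)⁻¹)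
      (-(r * r' * Real.sin θ / ell r r' θ) / (ell r r' θ) ^ 2) θ :=
    (hasDerivAt_ell h).inv hne
  have hmul := h1.mul h2
  have hG : (fun t => Gc r r' t) = fun t => (r * r' * Real.sin t) * (ell r r' t)⁻¹ := by
    funext t; simp [Gc, div_eq_mul_inv]
  rw [hG]
  refine hmul.congr_deriv ?_
  rw [hs]
  field_simp
  ring

lemma hasDerivAt_ell_sub {r r' k x : ℝ} (h : 0 < Qc r r' (k - x)) :
    HasDerivAt (fun t => ell r r' (k - t)) (-Gc r r' (k - x)) x := by
  have hb : HasDerivAt (fun t : ℝ => k - t) (-1) x := by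
    simpa using (hasDerivAt_id x).const_sub k
  have := (hasDerivAt_ell h).comp x hb
  exact this.congr_deriv (by unfold Gc; ring)

lemma hasDerivAt_ell_sub' {r r' k x : ℝ} (h : 0 < Qc r r' (x - k)) :
    HasDerivAt (fun t => ell r r' (t - k)) (Gc r r' (x - k)) x := by
  have hb : HasDerivAt (fun t : ℝ => t - k) 1 x := by
    simpa using (hasDerivAt_id x).sub_const k
  have := (hasDerivAt_ell h).comp x hb
  exact this.congr_deriv (by unfold Gc; ring)

lemma hasDerivAt_Gc_sub {r r' k x : ℝ} (h : 0 < Qc r r' (k - x)) (hs : Real.sin (k - x) = 0) :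
    HasDerivAt (fun t => Gc r r' (k - t))
      (-(r * r' * Real.cos (k - x) / ell r r' (k - x))) x := by
  have hb : HasDerivAt (fun t : ℝ => k - t) (-1) x := by
    simpa using (hasDerivAt_id x).const_sub k
  have := (hasDerivAt_Gc h hs).comp x hb
  exact this.congr_deriv (by ring)

lemma hasDerivAt_Gc_sub' {r r' k x : ℝ} (h : 0 < Qc r r' (x - k)) (hs : Real.sin (x - k) = 0) :
    HasDerivAt (fun t => Gc r r' (t - k))
      (r * r' * Real.cos (x - k) / ell r r' (x - k)) x := by
  have hb : HasDerivAt (fun t : ℝ => t - k) 1 x := by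
    simpa using (hasDerivAt_id x).sub_const k
  have := (hasDerivAt_Gc h hs).comp x hb
  exact this.congr_deriv (by ring)

lemma det_fin_three_of' (a b c d e f g h i : ℝ) :
    Matrix.det !![a, b, c; d, e, f; g, h, i] =
      a * e * i - a * f * h - b * d * i + b * f * g + c * d * h - c * e * g := by
  simp [Matrix.det_fin_three]

lemma pd1_L4 (r1 r2 r3 r4 b c x : ℝ) (h12 : 0 < Qc r1 r2 (b - x)) (h41 : 0 < Qc r4 r1 (x - 0)) :
    pd1 (L4 r1 r2 r3 r4) x b c = -Gc r1 r2 (b - x) + Gc r4 r1 (x - 0) := by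
  have hA := hasDerivAt_ell_sub (r := r1) (r' := r2) (k := b) h12
  have hB := hasDerivAt_ell_sub' (r := r4) (r' := r1) (k := (0:ℝ)) h41
  have h : HasDerivAt (fun t => L4 r1 r2 r3 r4 t b c)
      (-Gc r1 r2 (b - x) + Gc r4 r1 (x - 0)) x := by
    have := ((hA.add_const (ell r2 r3 (c - b))).add_const (ell r3 r4 (0 - c))).add hB
    exact this
  exact h.deriv

lemma pd2_L4 (r1 r2 r3 r4 a c y : ℝ) (h12 : 0 < Qc r1 r2 (y - a)) (h23 : 0 < Qc r2 r3 (c - y)) :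
    pd2 (L4 r1 r2 r3 r4) a y c = Gc r1 r2 (y - a) + -Gc r2 r3 (c - y) := by
  have hA := hasDerivAt_ell_sub' (r := r1) (r' := r2) (k := a) h12
  have hB := hasDerivAt_ell_sub (r := r2) (r' := r3) (k := c) h23
  have h : HasDerivAt (fun t => L4 r1 r2 r3 r4 a t c)
      (Gc r1 r2 (y - a) + -Gc r2 r3 (c - y)) y := by
    have := ((hA.add hB).add_const (ell r3 r4 (0 - c))).add_const (ell r4 r1 (a - 0))
    simpa [L4] using this
  exact h.deriv

lemma pd3_L4 (r1 r2 r3 r4 a b z : ℝ) (h23 : 0 < Qc r2 r3 (z - b)) (h34 : 0 < Qc r3 r4 (0 - z)) :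
    pd3 (L4 r1 r2 r3 r4) a b z = Gc r2 r3 (z - b) + -Gc r3 r4 (0 - z) := by
  have hA := hasDerivAt_ell_sub' (r := r2) (r' := r3) (k := b) h23
  have hB := hasDerivAt_ell_sub (r := r3) (r' := r4) (k := (0:ℝ)) h34
  have h : HasDerivAt (fun t => L4 r1 r2 r3 r4 a b t)
      (Gc r2 r3 (z - b) + -Gc r3 r4 (0 - z)) z := by
    have := (((hasDerivAt_const z (ell r1 r2 (b - a))).add hA).add hB).add_const
      (ell r4 r1 (a - 0))
    simpa [L4] using this
  exact h.deriv

lemma Qc_parade (r r' s t : ℝ) (hs : Real.sin s = 0) (ht : Real.sin t = 0)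
    (hcs : Real.cos s ^ 2 = 1) (hct : Real.cos t ^ 2 = 1) :
    Qc r r' (s - t) = (r * Real.cos t - r' * Real.cos s) ^ 2 := by
  simp only [Qc, Real.cos_sub, hs, ht, mul_zero, add_zero, zero_mul]
  nlinarith [hcs, hct]

lemma ell_parade (r r' s t : ℝ) (hs : Real.sin s = 0) (ht : Real.sin t = 0)
    (hcs : Real.cos s ^ 2 = 1) (hct : Real.cos t ^ 2 = 1) :
    ell r r' (s - t) = |r * Real.cos t - r' * Real.cos s| := by
  show Real.sqrt (Qc r r' (s - t)) = _
  rw [Qc_parade r r' s t hs ht hcs hct, Real.sqrt_sq_eq_abs]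

/-- at any parade for four concentric circles (angles in `{0, π}`, fourth
vertex fixed at `(r4, 0)`) with distinct consecutive signed coordinates `xᵢ = rᵢ cos αᵢ`
(`x₄ = r₄`), the Hessian of the perimeter in `(α₁, α₂, α₃)` equals the tridiagonal matrix
`[[b₁+b₂, −b₂, 0], [−b₂, b₂+b₃, −b₃], [0, −b₃, b₃+b₄]]` with
`bᵢ = x_{i−1} xᵢ / |x_{i−1} − xᵢ|` (indices mod 4), and its determinant equals
`(x₁x₂x₃x₄ / (|x₁−x₂||x₂−x₃||x₃−x₄||x₄−x₁|)) ·
(x₁x₂|x₃−x₄| + x₂x₃|x₄−x₁| + x₃x₄|x₁−x₂| + x₄x₁|x₂−x₃|)`. -/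
theorem stmt_16 (r1 r2 r3 r4 : ℝ) (h1 : 0 < r1) (h2 : 0 < r2) (h3 : 0 < r3) (h4 : 0 < r4)
    (a1 a2 a3 : ℝ) (hp1 : a1 = 0 ∨ a1 = π) (hp2 : a2 = 0 ∨ a2 = π) (hp3 : a3 = 0 ∨ a3 = π)
    (hx12 : r1 * Real.cos a1 ≠ r2 * Real.cos a2)
    (hx23 : r2 * Real.cos a2 ≠ r3 * Real.cos a3)
    (hx34 : r3 * Real.cos a3 ≠ r4)
    (hx41 : r4 ≠ r1 * Real.cos a1) :
    (hess4 r1 r2 r3 r4 a1 a2 a3 =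
      let x1 := r1 * Real.cos a1
      let x2 := r2 * Real.cos a2
      let x3 := r3 * Real.cos a3
      let x4 := r4
      let b1 := x4 * x1 / |x4 - x1|
      let b2 := x1 * x2 / |x1 - x2|
      let b3 := x2 * x3 / |x2 - x3|
      let b4 := x3 * x4 / |x3 - x4|
      !![b1 + b2, -b2, 0; -b2, b2 + b3, -b3; 0, -b3, b3 + b4]) ∧
    ((hess4 r1 r2 r3 r4 a1 a2 a3).det =
      let x1 := r1 * Real.cos a1
      let x2 := r2 * Real.cos a2
      let x3 := r3 * Real.cos a3
      let x4 := r4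
      x1 * x2 * x3 * x4 / (|x1 - x2| * |x2 - x3| * |x3 - x4| * |x4 - x1|) *
        (x1 * x2 * |x3 - x4| + x2 * x3 * |x4 - x1| + x3 * x4 * |x1 - x2| +
          x4 * x1 * |x2 - x3|)) := by

  -- basic parade facts
  have s1 : Real.sin a1 = 0 := by rcases hp1 with h | h <;> simp [h]
  have s2 : Real.sin a2 = 0 := by rcases hp2 with h | h <;> simp [h]
  have s3 : Real.sin a3 = 0 := by rcases hp3 with h | h <;> simp [h]
  have c1 : Real.cos a1 ^ 2 = 1 := by rcases hp1 with h | h <;> simp [h]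
  have c2 : Real.cos a2 ^ 2 = 1 := by rcases hp2 with h | h <;> simp [h]
  have c3 : Real.cos a3 ^ 2 = 1 := by rcases hp3 with h | h <;> simp [h]
  have s0 : Real.sin (0 : ℝ) = 0 := Real.sin_zero
  have c0 : Real.cos (0 : ℝ) ^ 2 = 1 := by simp
  -- positivity of the Q's
  have hne12 : r1 * Real.cos a1 - r2 * Real.cos a2 ≠ 0 := sub_ne_zero.mpr hx12
  have hne23 : r2 * Real.cos a2 - r3 * Real.cos a3 ≠ 0 := sub_ne_zero.mpr hx23
  have hne34 : r3 * Real.cos a3 - r4 ≠ 0 := sub_ne_zero.mpr hx34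
  have hne41 : r4 - r1 * Real.cos a1 ≠ 0 := sub_ne_zero.mpr hx41
  have hQ12 : 0 < Qc r1 r2 (a2 - a1) := by
    rw [Qc_parade r1 r2 a2 a1 s2 s1 c2 c1]; positivity
  have hQ23 : 0 < Qc r2 r3 (a3 - a2) := by
    rw [Qc_parade r2 r3 a3 a2 s3 s2 c3 c2]; positivity
  have hQ34 : 0 < Qc r3 r4 (0 - a3) := by
    rw [Qc_parade r3 r4 0 a3 s0 s3 c0 c3, Real.cos_zero, mul_one]; positivity
  have hQ41 : 0 < Qc r4 r1 (a1 - 0) := by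
    rw [Qc_parade r4 r1 a1 0 s1 s0 c1 c0, Real.cos_zero, mul_one]; positivity
  -- sines of differences vanish
  have s12 : Real.sin (a2 - a1) = 0 := by simp [Real.sin_sub, s1, s2]
  have s23 : Real.sin (a3 - a2) = 0 := by simp [Real.sin_sub, s2, s3]
  have s30 : Real.sin (0 - a3) = 0 := by simp [s3]
  have s10 : Real.sin (a1 - 0) = 0 := by simp [s1]
  -- cosines of differences
  have co12 : Real.cos (a2 - a1) = Real.cos a2 * Real.cos a1 := by
    simp [Real.cos_sub, s1, s2]
  have co23 : Real.cos (a3 - a2) = Real.cos a3 * Real.cos a2 := by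
    simp [Real.cos_sub, s2, s3]
  have co30 : Real.cos (0 - a3) = Real.cos a3 := by simp
  have co10 : Real.cos (a1 - 0) = Real.cos a1 := by simp
  -- values of ell at the parade
  have e12 : ell r1 r2 (a2 - a1) = |r1 * Real.cos a1 - r2 * Real.cos a2| :=
    ell_parade r1 r2 a2 a1 s2 s1 c2 c1
  have e23 : ell r2 r3 (a3 - a2) = |r2 * Real.cos a2 - r3 * Real.cos a3| :=
    ell_parade r2 r3 a3 a2 s3 s2 c3 c2
  have e34 : ell r3 r4 (0 - a3) = |r3 * Real.cos a3 - r4| := by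
    have := ell_parade r3 r4 0 a3 s0 s3 c0 c3
    simpa using this
  have e41 : ell r4 r1 (a1 - 0) = |r4 - r1 * Real.cos a1| := by
    have := ell_parade r4 r1 a1 0 s1 s0 c1 c0
    simpa using this
  -- conversion of the second-derivative coefficients
  have hc12 : r1 * r2 * Real.cos (a2 - a1) / ell r1 r2 (a2 - a1)
      = r1 * Real.cos a1 * (r2 * Real.cos a2) / |r1 * Real.cos a1 - r2 * Real.cos a2| := by
    rw [co12, e12]; ring_nf
  have hc23 : r2 * r3 * Real.cos (a3 - a2) / ell r2 r3 (a3 - a2)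
      = r2 * Real.cos a2 * (r3 * Real.cos a3) / |r2 * Real.cos a2 - r3 * Real.cos a3| := by
    rw [co23, e23]; ring_nf
  have hc34 : r3 * r4 * Real.cos (0 - a3) / ell r3 r4 (0 - a3)
      = r3 * Real.cos a3 * r4 / |r3 * Real.cos a3 - r4| := by
    rw [co30, e34]; ring_nf
  have hc41 : r4 * r1 * Real.cos (a1 - 0) / ell r4 r1 (a1 - 0)
      = r4 * (r1 * Real.cos a1) / |r4 - r1 * Real.cos a1| := by
    rw [co10, e41]; ring_nf
  -- continuity facts
  have hcQ : ∀ (r r' : ℝ) (g : ℝ → ℝ), Continuous g →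
      Continuous (fun x => Qc r r' (g x)) := by
    intro r r' g hg
    unfold Qc
    fun_prop
  have hcsub : ∀ k : ℝ, Continuous (fun x : ℝ => k - x) := fun k => by fun_prop
  have hcsub' : ∀ k : ℝ, Continuous (fun x : ℝ => x - k) := fun k => by fun_prop
  -- eventual formulas for the first partials: direction x at a1
  have hev1x : (fun x => pd1 (L4 r1 r2 r3 r4) x a2 a3)
      =ᶠ[nhds a1] (fun x => -Gc r1 r2 (a2 - x) + Gc r4 r1 (x - 0)) := by
    have hA := (hcQ r1 r2 _ (hcsub a2)).continuousAt (x := a1) (Ioi_mem_nhds hQ12)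
    have hB := (hcQ r4 r1 _ (hcsub' 0)).continuousAt (x := a1) (Ioi_mem_nhds hQ41)
    filter_upwards [hA, hB] with x h1 h2
    exact pd1_L4 r1 r2 r3 r4 a2 a3 x h1 h2
  have hev2x : (fun x => pd2 (L4 r1 r2 r3 r4) x a2 a3)
      =ᶠ[nhds a1] (fun x => Gc r1 r2 (a2 - x) + -Gc r2 r3 (a3 - a2)) := by
    have hA := (hcQ r1 r2 _ (hcsub a2)).continuousAt (x := a1) (Ioi_mem_nhds hQ12)
    filter_upwards [hA] with x h1
    exact pd2_L4 r1 r2 r3 r4 x a3 a2 h1 hQ23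
  -- direction y at a2
  have hev1y : (fun y => pd1 (L4 r1 r2 r3 r4) a1 y a3)
      =ᶠ[nhds a2] (fun y => -Gc r1 r2 (y - a1) + Gc r4 r1 (a1 - 0)) := by
    have hA := (hcQ r1 r2 _ (hcsub' a1)).continuousAt (x := a2) (Ioi_mem_nhds hQ12)
    filter_upwards [hA] with y h1
    exact pd1_L4 r1 r2 r3 r4 y a3 a1 h1 hQ41
  have hev2y : (fun y => pd2 (L4 r1 r2 r3 r4) a1 y a3)
      =ᶠ[nhds a2] (fun y => Gc r1 r2 (y - a1) + -Gc r2 r3 (a3 - y)) := by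
    have hA := (hcQ r1 r2 _ (hcsub' a1)).continuousAt (x := a2) (Ioi_mem_nhds hQ12)
    have hB := (hcQ r2 r3 _ (hcsub a3)).continuousAt (x := a2) (Ioi_mem_nhds hQ23)
    filter_upwards [hA, hB] with y h1 h2
    exact pd2_L4 r1 r2 r3 r4 a1 a3 y h1 h2
  have hev3y : (fun y => pd3 (L4 r1 r2 r3 r4) a1 y a3)
      =ᶠ[nhds a2] (fun y => Gc r2 r3 (a3 - y) + -Gc r3 r4 (0 - a3)) := by
    have hB := (hcQ r2 r3 _ (hcsub a3)).continuousAt (x := a2) (Ioi_mem_nhds hQ23)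
    filter_upwards [hB] with y h2
    exact pd3_L4 r1 r2 r3 r4 a1 y a3 h2 hQ34
  -- direction z at a3
  have hev2z : (fun z => pd2 (L4 r1 r2 r3 r4) a1 a2 z)
      =ᶠ[nhds a3] (fun z => Gc r1 r2 (a2 - a1) + -Gc r2 r3 (z - a2)) := by
    have hB := (hcQ r2 r3 _ (hcsub' a2)).continuousAt (x := a3) (Ioi_mem_nhds hQ23)
    filter_upwards [hB] with z h2
    exact pd2_L4 r1 r2 r3 r4 a1 z a2 hQ12 h2
  have hev3z : (fun z => pd3 (L4 r1 r2 r3 r4) a1 a2 z)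
      =ᶠ[nhds a3] (fun z => Gc r2 r3 (z - a2) + -Gc r3 r4 (0 - z)) := by
    have hA := (hcQ r2 r3 _ (hcsub' a2)).continuousAt (x := a3) (Ioi_mem_nhds hQ23)
    have hB := (hcQ r3 r4 _ (hcsub 0)).continuousAt (x := a3) (Ioi_mem_nhds hQ34)
    filter_upwards [hA, hB] with z h1 h2
    exact pd3_L4 r1 r2 r3 r4 a1 a2 z h1 h2
  -- the nine Hessian entries
  have H11 : pd1 (pd1 (L4 r1 r2 r3 r4)) a1 a2 a3
      = r4 * r1 * Real.cos (a1 - 0) / ell r4 r1 (a1 - 0)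
        + r1 * r2 * Real.cos (a2 - a1) / ell r1 r2 (a2 - a1) := by
    have hd : HasDerivAt (fun x => -Gc r1 r2 (a2 - x) + Gc r4 r1 (x - 0))
        (r4 * r1 * Real.cos (a1 - 0) / ell r4 r1 (a1 - 0)
          + r1 * r2 * Real.cos (a2 - a1) / ell r1 r2 (a2 - a1)) a1 := by
      have hA := (hasDerivAt_Gc_sub hQ12 s12).neg
      have hB := hasDerivAt_Gc_sub' hQ41 s10
      refine (hA.add hB).congr_deriv ?_
      ring
    show deriv (fun x => pd1 (L4 r1 r2 r3 r4) x a2 a3) a1 = _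
    rw [hev1x.deriv_eq]
    exact hd.deriv
  have H12 : pd1 (pd2 (L4 r1 r2 r3 r4)) a1 a2 a3
      = -(r1 * r2 * Real.cos (a2 - a1) / ell r1 r2 (a2 - a1)) := by
    have hd : HasDerivAt (fun x => Gc r1 r2 (a2 - x) + -Gc r2 r3 (a3 - a2))
        (-(r1 * r2 * Real.cos (a2 - a1) / ell r1 r2 (a2 - a1))) a1 := by
      have hA := (hasDerivAt_Gc_sub hQ12 s12).add_const (-Gc r2 r3 (a3 - a2))
      exact hA
    show deriv (fun x => pd2 (L4 r1 r2 r3 r4) x a2 a3) a1 = _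
    rw [hev2x.deriv_eq]
    exact hd.deriv
  have H13 : pd1 (pd3 (L4 r1 r2 r3 r4)) a1 a2 a3 = 0 := by
    have hconst : (fun x => pd3 (L4 r1 r2 r3 r4) x a2 a3)
        = fun _ => Gc r2 r3 (a3 - a2) + -Gc r3 r4 (0 - a3) :=
      funext fun x => pd3_L4 r1 r2 r3 r4 x a2 a3 hQ23 hQ34
    show deriv (fun x => pd3 (L4 r1 r2 r3 r4) x a2 a3) a1 = 0
    rw [hconst]
    exact deriv_const _ _
  have H21 : pd2 (pd1 (L4 r1 r2 r3 r4)) a1 a2 a3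
      = -(r1 * r2 * Real.cos (a2 - a1) / ell r1 r2 (a2 - a1)) := by
    have hd : HasDerivAt (fun y => -Gc r1 r2 (y - a1) + Gc r4 r1 (a1 - 0))
        (-(r1 * r2 * Real.cos (a2 - a1) / ell r1 r2 (a2 - a1))) a2 :=
      ((hasDerivAt_Gc_sub' hQ12 s12).neg).add_const (Gc r4 r1 (a1 - 0))
    show deriv (fun y => pd1 (L4 r1 r2 r3 r4) a1 y a3) a2 = _
    rw [hev1y.deriv_eq]
    exact hd.deriv
  have H22 : pd2 (pd2 (L4 r1 r2 r3 r4)) a1 a2 a3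
      = r1 * r2 * Real.cos (a2 - a1) / ell r1 r2 (a2 - a1)
        + r2 * r3 * Real.cos (a3 - a2) / ell r2 r3 (a3 - a2) := by
    have hd : HasDerivAt (fun y => Gc r1 r2 (y - a1) + -Gc r2 r3 (a3 - y))
        (r1 * r2 * Real.cos (a2 - a1) / ell r1 r2 (a2 - a1)
          + r2 * r3 * Real.cos (a3 - a2) / ell r2 r3 (a3 - a2)) a2 := by
      have hA := hasDerivAt_Gc_sub' hQ12 s12
      have hB := (hasDerivAt_Gc_sub hQ23 s23).neg
      refine (hA.add hB).congr_deriv ?_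
      ring
    show deriv (fun y => pd2 (L4 r1 r2 r3 r4) a1 y a3) a2 = _
    rw [hev2y.deriv_eq]
    exact hd.deriv
  have H23 : pd2 (pd3 (L4 r1 r2 r3 r4)) a1 a2 a3
      = -(r2 * r3 * Real.cos (a3 - a2) / ell r2 r3 (a3 - a2)) := by
    have hd : HasDerivAt (fun y => Gc r2 r3 (a3 - y) + -Gc r3 r4 (0 - a3))
        (-(r2 * r3 * Real.cos (a3 - a2) / ell r2 r3 (a3 - a2))) a2 :=
      (hasDerivAt_Gc_sub hQ23 s23).add_const (-Gc r3 r4 (0 - a3))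
    show deriv (fun y => pd3 (L4 r1 r2 r3 r4) a1 y a3) a2 = _
    rw [hev3y.deriv_eq]
    exact hd.deriv
  have H31 : pd3 (pd1 (L4 r1 r2 r3 r4)) a1 a2 a3 = 0 := by
    have hconst : (fun z => pd1 (L4 r1 r2 r3 r4) a1 a2 z)
        = fun _ => -Gc r1 r2 (a2 - a1) + Gc r4 r1 (a1 - 0) :=
      funext fun z => pd1_L4 r1 r2 r3 r4 a2 z a1 hQ12 hQ41
    show deriv (fun z => pd1 (L4 r1 r2 r3 r4) a1 a2 z) a3 = 0
    rw [hconst]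
    exact deriv_const _ _
  have H32 : pd3 (pd2 (L4 r1 r2 r3 r4)) a1 a2 a3
      = -(r2 * r3 * Real.cos (a3 - a2) / ell r2 r3 (a3 - a2)) := by
    have hd : HasDerivAt (fun z => Gc r1 r2 (a2 - a1) + -Gc r2 r3 (z - a2))
        (-(r2 * r3 * Real.cos (a3 - a2) / ell r2 r3 (a3 - a2))) a3 := by
      have hB := (hasDerivAt_Gc_sub' hQ23 s23).neg
      have := hB.const_add (Gc r1 r2 (a2 - a1))
      exact this
    show deriv (fun z => pd2 (L4 r1 r2 r3 r4) a1 a2 z) a3 = _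
    rw [hev2z.deriv_eq]
    exact hd.deriv
  have H33 : pd3 (pd3 (L4 r1 r2 r3 r4)) a1 a2 a3
      = r2 * r3 * Real.cos (a3 - a2) / ell r2 r3 (a3 - a2)
        + r3 * r4 * Real.cos (0 - a3) / ell r3 r4 (0 - a3) := by
    have hd : HasDerivAt (fun z => Gc r2 r3 (z - a2) + -Gc r3 r4 (0 - z))
        (r2 * r3 * Real.cos (a3 - a2) / ell r2 r3 (a3 - a2)
          + r3 * r4 * Real.cos (0 - a3) / ell r3 r4 (0 - a3)) a3 := by
      have hA := hasDerivAt_Gc_sub' hQ23 s23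
      have hB := (hasDerivAt_Gc_sub hQ34 s30).neg
      refine (hA.add hB).congr_deriv ?_
      ring
    show deriv (fun z => pd3 (L4 r1 r2 r3 r4) a1 a2 z) a3 = _
    rw [hev3z.deriv_eq]
    exact hd.deriv
  -- assemble the matrix identity
  have hM : hess4 r1 r2 r3 r4 a1 a2 a3 =
      !![r4 * (r1 * Real.cos a1) / |r4 - r1 * Real.cos a1|
           + r1 * Real.cos a1 * (r2 * Real.cos a2) / |r1 * Real.cos a1 - r2 * Real.cos a2|,
         -(r1 * Real.cos a1 * (r2 * Real.cos a2) / |r1 * Real.cos a1 - r2 * Real.cos a2|), 0;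
         -(r1 * Real.cos a1 * (r2 * Real.cos a2) / |r1 * Real.cos a1 - r2 * Real.cos a2|),
         r1 * Real.cos a1 * (r2 * Real.cos a2) / |r1 * Real.cos a1 - r2 * Real.cos a2|
           + r2 * Real.cos a2 * (r3 * Real.cos a3) / |r2 * Real.cos a2 - r3 * Real.cos a3|,
         -(r2 * Real.cos a2 * (r3 * Real.cos a3) / |r2 * Real.cos a2 - r3 * Real.cos a3|); 0,
         -(r2 * Real.cos a2 * (r3 * Real.cos a3) / |r2 * Real.cos a2 - r3 * Real.cos a3|),
         r2 * Real.cos a2 * (r3 * Real.cos a3) / |r2 * Real.cos a2 - r3 * Real.cos a3|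
           + r3 * Real.cos a3 * r4 / |r3 * Real.cos a3 - r4|] := by
    unfold hess4
    rw [H11, H12, H13, H21, H22, H23, H31, H32, H33, hc12, hc23, hc34, hc41]
  refine ⟨?_, ?_⟩
  · exact hM
  · show (hess4 r1 r2 r3 r4 a1 a2 a3).det =
      r1 * Real.cos a1 * (r2 * Real.cos a2) * (r3 * Real.cos a3) * r4 /
          (|r1 * Real.cos a1 - r2 * Real.cos a2| * |r2 * Real.cos a2 - r3 * Real.cos a3| *
            |r3 * Real.cos a3 - r4| * |r4 - r1 * Real.cos a1|) *
        (r1 * Real.cos a1 * (r2 * Real.cos a2) * |r3 * Real.cos a3 - r4| +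
          r2 * Real.cos a2 * (r3 * Real.cos a3) * |r4 - r1 * Real.cos a1| +
          r3 * Real.cos a3 * r4 * |r1 * Real.cos a1 - r2 * Real.cos a2| +
          r4 * (r1 * Real.cos a1) * |r2 * Real.cos a2 - r3 * Real.cos a3|)
    obtain ⟨D12, hD12, d12⟩ : ∃ D, |r1 * Real.cos a1 - r2 * Real.cos a2| = D ∧ (0:ℝ) < D :=
      ⟨_, rfl, abs_pos.mpr hne12⟩
    obtain ⟨D23, hD23, d23⟩ : ∃ D, |r2 * Real.cos a2 - r3 * Real.cos a3| = D ∧ (0:ℝ) < D :=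
      ⟨_, rfl, abs_pos.mpr hne23⟩
    obtain ⟨D34, hD34, d34⟩ : ∃ D, |r3 * Real.cos a3 - r4| = D ∧ (0:ℝ) < D :=
      ⟨_, rfl, abs_pos.mpr hne34⟩
    obtain ⟨D41, hD41, d41⟩ : ∃ D, |r4 - r1 * Real.cos a1| = D ∧ (0:ℝ) < D :=
      ⟨_, rfl, abs_pos.mpr hne41⟩
    rw [hM, det_fin_three_of', hD12, hD23, hD34, hD41]
    field_simp
    ring
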